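/- The function d(⟨α,f⟩, ⟨β,g⟩) = α + β − 2·min{α, β, c(f,g)} on Γ_G = S_G/∼ is a Λ-metric: it is nonnegative, symmetric, vanishes exactly on the diagonal, and satisfies the triangle inequality. -/

import Mathlib

private lemma two_nsmul_cancel {Λ : Type*} [AddCommGroup Λ] [LinearOrder Λ] [IsOrderedAddMonoid Λ]
    {a b : Λ} (h : 2 • a = 2 • b) : a = b := by
  rw [two_nsmul, two_nsmul] at h
  rcases lt_trichotomy a b with hlt | heq | hgt
  · exact absurd h (ne_of_lt (add_lt_add hlt hlt))
  · exact heq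
  · exact absurd h (ne_of_gt (add_lt_add hgt hgt))

/-- The function `d(⟨α,f⟩, ⟨β,g⟩) = α + β − 2·min{α, β, c(f,g)}` on
`Γ_G = S_G/∼` is a `Λ`-metric: it is nonnegative (M1), symmetric (M3), vanishes
exactly on the diagonal of the quotient, i.e. `d p q = 0` iff `p ∼ q` (M2), and
satisfies the triangle inequality (M4). Points of `Γ_G` are represented by pairs
`(α, f)` with `0 ≤ α ≤ l f`, and `(α,f) ∼ (β,g)` iff `α = β ≤ c(f,g)`. -/
theorem universal_tree_metric {Λ : Type*} [AddCommGroup Λ] [LinearOrder Λ] [IsOrderedAddMonoid Λ]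
    {G : Type*} [Group G] (l : G → Λ) (c : G → G → Λ)
    (hc : ∀ x y, 2 • c x y = l x + l y - l (x⁻¹ * y))
    (hL1 : ∀ x, 0 ≤ l x) (hL1' : l 1 = 0)
    (hL2 : ∀ x, l x⁻¹ = l x)
    (hL3 : ∀ x y z, c x z < c x y → c x z = c y z)
    (d : Λ × G → Λ × G → Λ)
    (hd : ∀ p q : Λ × G, d p q = p.1 + q.1 - 2 • min p.1 (min q.1 (c p.2 q.2))) :
    ∀ p q r : Λ × G,
      0 ≤ p.1 → p.1 ≤ l p.2 → 0 ≤ q.1 → q.1 ≤ l q.2 → 0 ≤ r.1 → r.1 ≤ l r.2 →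
      (0 ≤ d p q) ∧
      (d p q = d q p) ∧
      (d p q = 0 ↔ (p.1 = q.1 ∧ p.1 ≤ c p.2 q.2)) ∧
      (d p q ≤ d p r + d q r) := by
  -- symmetry of c
  have csymm : ∀ x y : G, c x y = c y x := by
    intro x y
    apply two_nsmul_cancel
    rw [hc, hc]
    have : y⁻¹ * x = (x⁻¹ * y)⁻¹ := by group
    rw [this, hL2]
    abel
  -- 0-hyperbolicity
  have cmin : ∀ x y z : G, min (c x z) (c y z) ≤ c x y := by
    intro x y z
    by_contra hcon
    push_neg at hcon
    rw [lt_min_iff] at hcon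
    obtain ⟨h1, h2⟩ := hcon
    have := hL3 x z y h1
    rw [this, csymm z y] at h2
    exact lt_irrefl _ h2
  intro p q r hp0 hpl hq0 hql hr0 hrl
  set α := p.1 with hα
  set β := q.1 with hβ
  set γ := r.1 with hγ
  refine ⟨?_, ?_, ?_, ?_⟩
  · -- nonneg
    rw [hd, two_nsmul, sub_nonneg]
    exact add_le_add (min_le_left _ _) (le_trans (min_le_right _ _) (min_le_left _ _))
  · -- symmetry
    rw [hd, hd, csymm q.2 p.2, min_left_comm, add_comm]
  · -- M2
    rw [hd, two_nsmul]
    constructor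
    · intro h
      have hsub : α + β = min α (min β (c p.2 q.2)) + min α (min β (c p.2 q.2)) := by
        exact sub_eq_zero.mp h
      set m := min α (min β (c p.2 q.2)) with hm
      have hmα : m ≤ α := min_le_left _ _
      have hmβ : m ≤ β := le_trans (min_le_right _ _) (min_le_left _ _)
      have hmc : m ≤ c p.2 q.2 := le_trans (min_le_right _ _) (min_le_right _ _)
      have heqα : m = α := by
        by_contra hne
        have : m < α := lt_of_le_of_ne hmα hne
        exact absurd hsub.symm (ne_of_lt (add_lt_add_of_lt_of_le this hmβ))
      have heqβ : m = β := by
        by_contra hne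
        have : m < β := lt_of_le_of_ne hmβ hne
        exact absurd hsub.symm (ne_of_lt (add_lt_add_of_le_of_lt hmα this))
      exact ⟨heqα ▸ heqβ ▸ rfl, heqα ▸ hmc⟩
    · rintro ⟨h1, h2⟩
      have hmin : min α (min β (c p.2 q.2)) = α := min_eq_left (le_min h1.le h2)
      rw [hmin]
      show α + β - (α + α) = 0
      rw [← h1]
      abel
  · -- triangle
    rw [hd, hd, hd]
    set M := min α (min β (c p.2 q.2)) with hM
    set A := min α (min γ (c p.2 r.2)) with hA
    set B := min β (min γ (c q.2 r.2)) with hB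
    have hAα : A ≤ α := min_le_left _ _
    have hAγ : A ≤ γ := le_trans (min_le_right _ _) (min_le_left _ _)
    have hAc : A ≤ c p.2 r.2 := le_trans (min_le_right _ _) (min_le_right _ _)
    have hBβ : B ≤ β := min_le_left _ _
    have hBγ : B ≤ γ := le_trans (min_le_right _ _) (min_le_left _ _)
    have hBc : B ≤ c q.2 r.2 := le_trans (min_le_right _ _) (min_le_right _ _)
    have hminM : min A B ≤ M := by
      refine le_min (le_trans (min_le_left _ _) hAα) (le_min (le_trans (min_le_right _ _) hBβ) ?_)
      refine le_trans ?_ (cmin p.2 q.2 r.2)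
      exact le_min (le_trans (min_le_left _ _) hAc) (le_trans (min_le_right _ _) hBc)
    have hmaxγ : max A B ≤ γ := max_le hAγ hBγ
    have key : A + B ≤ γ + M := by
      calc A + B = min A B + max A B := (min_add_max A B).symm
        _ ≤ M + γ := add_le_add hminM hmaxγ
        _ = γ + M := add_comm _ _
    have key2 : (A + A) + (B + B) ≤ (γ + γ) + (M + M) := by
      have := add_le_add key key
      calc (A + A) + (B + B) = (A + B) + (A + B) := by abel
        _ ≤ (γ + M) + (γ + M) := this
        _ = (γ + γ) + (M + M) := by abel
    rw [two_nsmul, two_nsmul, two_nsmul]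
    have hrw : (α + γ - (A + A)) + (β + γ - (B + B))
        = (α + β) + ((γ + γ) - ((A + A) + (B + B))) := by abel
    rw [hrw]
    have h' : (A + A) + (B + B) - (γ + γ) ≤ M + M :=
      sub_le_iff_le_add.mpr (by rw [add_comm (γ + γ)] at key2; exact key2)
    have : -(M + M) ≤ (γ + γ) - ((A + A) + (B + B)) := by
      rw [neg_le, neg_sub]
      exact h'
    calc α + β - (M + M) = (α + β) + (-(M + M)) := by abel
      _ ≤ (α + β) + ((γ + γ) - ((A + A) + (B + B))) := add_le_add_right this _
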